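/- Blockwise subspace approximation bound: let n, m, r be positive integers, and for each j ∈ Fin n let κⱼ : Fin m → ℝ be positive, Kⱼ the diagonal matrix with entries κⱼ, and T₁ⱼ, T₂ⱼ be κⱼ-orthonormal m×r matrices. Let v : Fin n → ℝ^m be such that each block vⱼ lies in the column span of T₂ⱼ and the global weighted norm satisfies Σⱼ vⱼᵀ Kⱼ vⱼ ≤ 1. Then, with the blockwise κⱼ-orthogonal projections wⱼ = T₁ⱼ T₁ⱼᵀ Kⱼ vⱼ, one has Σⱼ (vⱼ − wⱼ)ᵀ Kⱼ (vⱼ − wⱼ) ≤ max over j of (r − ‖T₁ⱼᵀ Kⱼ T₂ⱼ‖_F²). -/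

import Mathlib

open Matrix

/-- Frobenius norm of a real matrix. -/
noncomputable def frobNorm {α β : Type*} [Fintype α] [Fintype β] (M : Matrix α β ℝ) : ℝ :=
  Real.sqrt (∑ i, ∑ j, (M i j) ^ 2)

/-- Subspace distance between two κ-orthonormal bases. -/
noncomputable def distK {m r : ℕ} (κ : Fin m → ℝ) (T₁ T₂ : Matrix (Fin m) (Fin r) ℝ) : ℝ :=
  Real.sqrt ((r : ℝ) - (frobNorm (T₁ᵀ * Matrix.diagonal κ * T₂)) ^ 2)

section Aux

variable {m r : ℕ}

lemma dotK_comm (κ : Fin m → ℝ) (a b : Fin m → ℝ) :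
    a ⬝ᵥ (Matrix.diagonal κ *ᵥ b) = b ⬝ᵥ (Matrix.diagonal κ *ᵥ a) := by
  rw [dotProduct_mulVec, ← diagonal_transpose κ, vecMul_transpose, diagonal_transpose,
    dotProduct_comm]

lemma dotK_nonneg (κ : Fin m → ℝ) (hκ : ∀ i, 0 < κ i) (a : Fin m → ℝ) :
    0 ≤ a ⬝ᵥ (Matrix.diagonal κ *ᵥ a) := by
  simp only [dotProduct, mulVec_diagonal]
  refine Finset.sum_nonneg fun i _ => ?_
  have h1 := (hκ i).le
  nlinarith [mul_self_nonneg (a i)]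

lemma orth_quad (κ : Fin m → ℝ) (T : Matrix (Fin m) (Fin r) ℝ)
    (hT : Tᵀ * Matrix.diagonal κ * T = 1) (u : Fin r → ℝ) :
    (T *ᵥ u) ⬝ᵥ (Matrix.diagonal κ *ᵥ (T *ᵥ u)) = u ⬝ᵥ u := by
  rw [mulVec_mulVec, dotProduct_mulVec, ← mulVec_transpose, transpose_mul,
    diagonal_transpose, mulVec_mulVec, hT, one_mulVec]

lemma cross_quad (κ : Fin m → ℝ) (T : Matrix (Fin m) (Fin r) ℝ)
    (x : Fin m → ℝ) (u : Fin r → ℝ) :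
    x ⬝ᵥ (Matrix.diagonal κ *ᵥ (T *ᵥ u)) = (Tᵀ *ᵥ (Matrix.diagonal κ *ᵥ x)) ⬝ᵥ u := by
  rw [mulVec_mulVec, dotProduct_mulVec, ← mulVec_transpose, transpose_mul,
    diagonal_transpose, ← mulVec_mulVec]

lemma resid_eq (κ : Fin m → ℝ) (T : Matrix (Fin m) (Fin r) ℝ)
    (hT : Tᵀ * Matrix.diagonal κ * T = 1) (x : Fin m → ℝ) :
    (x - T *ᵥ (Tᵀ *ᵥ (Matrix.diagonal κ *ᵥ x))) ⬝ᵥ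
      (Matrix.diagonal κ *ᵥ (x - T *ᵥ (Tᵀ *ᵥ (Matrix.diagonal κ *ᵥ x)))) =
    x ⬝ᵥ (Matrix.diagonal κ *ᵥ x)
      - (Tᵀ *ᵥ (Matrix.diagonal κ *ᵥ x)) ⬝ᵥ (Tᵀ *ᵥ (Matrix.diagonal κ *ᵥ x)) := by
  set u := Tᵀ *ᵥ (Matrix.diagonal κ *ᵥ x) with hu
  have h1 : (T *ᵥ u) ⬝ᵥ (Matrix.diagonal κ *ᵥ (T *ᵥ u)) = u ⬝ᵥ u := orth_quad κ T hT u
  have h2 : x ⬝ᵥ (Matrix.diagonal κ *ᵥ (T *ᵥ u)) = u ⬝ᵥ u := cross_quad κ T x u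
  have h3 : (T *ᵥ u) ⬝ᵥ (Matrix.diagonal κ *ᵥ x) = u ⬝ᵥ u := by rw [dotK_comm]; exact h2
  rw [mulVec_sub, sub_dotProduct, dotProduct_sub, dotProduct_sub, h1, h2, h3]
  ring

lemma psd_quad_le_trace_mul (A : Matrix (Fin r) (Fin r) ℝ) (hA : A.PosSemidef)
    (c : Fin r → ℝ) : c ⬝ᵥ (A *ᵥ c) ≤ A.trace * (c ⬝ᵥ c) := by
  obtain ⟨B, hBsym, hBB⟩ : ∃ B : Matrix (Fin r) (Fin r) ℝ, Bᵀ = B ∧ B * B = A := by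
    open scoped MatrixOrder Norms.L2Operator in
    refine ⟨CFC.sqrt A, ?_, CFC.sqrt_mul_sqrt_self A hA.nonneg⟩
    have h := (CFC.sqrt_nonneg A).posSemidef.1
    rwa [Matrix.IsHermitian, conjTranspose_eq_transpose_of_trivial] at h
  have hquad : c ⬝ᵥ (A *ᵥ c) = (B *ᵥ c) ⬝ᵥ (B *ᵥ c) := by
    rw [← hBB, ← mulVec_mulVec, dotProduct_mulVec]
    congr 1
    conv_lhs => rw [← hBsym]
    exact vecMul_transpose B c
  have htr : A.trace = ∑ i, ∑ k, (B i k) ^ 2 := by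
    rw [← hBB]
    simp only [Matrix.trace, Matrix.diag, Matrix.mul_apply]
    refine Finset.sum_congr rfl fun i _ => Finset.sum_congr rfl fun k _ => ?_
    have hki : B k i = B i k := by
      conv_lhs => rw [← hBsym, transpose_apply]
    rw [hki, sq]
  have hcs : (B *ᵥ c) ⬝ᵥ (B *ᵥ c) ≤ (∑ i, ∑ k, (B i k) ^ 2) * (∑ k, (c k) ^ 2) := by
    have h1 : (B *ᵥ c) ⬝ᵥ (B *ᵥ c) = ∑ i, (∑ k, B i k * c k) ^ 2 := by
      simp [dotProduct, Matrix.mulVec, sq]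
    rw [h1, Finset.sum_mul]
    refine Finset.sum_le_sum fun i _ => ?_
    exact Finset.sum_mul_sq_le_sq_mul_sq Finset.univ (fun k => B i k) c
  have hcc : c ⬝ᵥ c = ∑ k, (c k) ^ 2 := by simp [dotProduct, sq]
  rw [hquad, htr, hcc]
  exact hcs

lemma psd_trace_nonneg (A : Matrix (Fin r) (Fin r) ℝ) (hA : A.PosSemidef) :
    0 ≤ A.trace := by
  refine Finset.sum_nonneg fun i _ => ?_
  have := hA.dotProduct_mulVec_nonneg (Pi.single i 1)
  simpa [dotProduct, Matrix.mulVec_single, Pi.single_apply, Finset.sum_ite_eq'] using this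

end Aux

/-- Blockwise subspace approximation bound. -/
theorem blockwise_proj_residual_le_max_dist_sq (n m r : ℕ)
    (hn : 0 < n) (hm : 0 < m) (hr : 0 < r)
    (κ : Fin n → Fin m → ℝ) (hκ : ∀ j i, 0 < κ j i)
    (T₁ T₂ : Fin n → Matrix (Fin m) (Fin r) ℝ)
    (hT₁ : ∀ j, (T₁ j)ᵀ * Matrix.diagonal (κ j) * T₁ j = 1)
    (hT₂ : ∀ j, (T₂ j)ᵀ * Matrix.diagonal (κ j) * T₂ j = 1)
    (v : Fin n → Fin m → ℝ)
    (hv : ∀ j, v j ∈ LinearMap.range (T₂ j).mulVecLin)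
    (hvnorm : ∑ j, v j ⬝ᵥ (Matrix.diagonal (κ j) *ᵥ v j) ≤ 1)
    (w : Fin n → Fin m → ℝ)
    (hw : ∀ j, w j = T₁ j *ᵥ ((T₁ j)ᵀ *ᵥ (Matrix.diagonal (κ j) *ᵥ v j))) :
    ∑ j, (v j - w j) ⬝ᵥ (Matrix.diagonal (κ j) *ᵥ (v j - w j)) ≤
      ⨆ j, ((r : ℝ) - (frobNorm ((T₁ j)ᵀ * Matrix.diagonal (κ j) * T₂ j)) ^ 2) := by
  haveI : Nonempty (Fin n) := ⟨⟨0, hn⟩⟩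
  set d : Fin n → ℝ :=
    fun j => (r : ℝ) - (frobNorm ((T₁ j)ᵀ * Matrix.diagonal (κ j) * T₂ j)) ^ 2 with hd
  set q : Fin n → ℝ := fun j => v j ⬝ᵥ (Matrix.diagonal (κ j) *ᵥ v j) with hq
  -- per-block facts
  have hblock : ∀ j,
      ((v j - w j) ⬝ᵥ (Matrix.diagonal (κ j) *ᵥ (v j - w j)) ≤ d j * q j) ∧ 0 ≤ d j := by
    intro j
    set K := Matrix.diagonal (κ j) with hK
    set M := (T₁ j)ᵀ * K * T₂ j with hM
    obtain ⟨c, hc⟩ := hv j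
    rw [mulVecLin_apply] at hc
    -- frobNorm squared
    have hfs : (frobNorm M) ^ 2 = ∑ i, ∑ k, (M i k) ^ 2 := by
      rw [frobNorm, Real.sq_sqrt]
      exact Finset.sum_nonneg fun i _ =>
        Finset.sum_nonneg fun k _ => sq_nonneg _
    -- A := 1 - MᵀM is PSD
    have hquadA : ∀ x : Fin r → ℝ,
        x ⬝ᵥ ((1 - Mᵀ * M) *ᵥ x) = x ⬝ᵥ x - (M *ᵥ x) ⬝ᵥ (M *ᵥ x) := by
      intro x
      rw [sub_mulVec, dotProduct_sub, one_mulVec]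
      congr 1
      rw [← mulVec_mulVec, dotProduct_mulVec, vecMul_transpose]
    have hMx : ∀ x : Fin r → ℝ, (M *ᵥ x) ⬝ᵥ (M *ᵥ x) ≤ x ⬝ᵥ x := by
      intro x
      have hres := resid_eq (κ j) (T₁ j) (hT₁ j) (T₂ j *ᵥ x)
      have hnn := dotK_nonneg (κ j) (hκ j)
        (T₂ j *ᵥ x - T₁ j *ᵥ ((T₁ j)ᵀ *ᵥ (Matrix.diagonal (κ j) *ᵥ (T₂ j *ᵥ x))))
      rw [hres] at hnn
      have hxKx : (T₂ j *ᵥ x) ⬝ᵥ (Matrix.diagonal (κ j) *ᵥ (T₂ j *ᵥ x)) = x ⬝ᵥ x :=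
        orth_quad (κ j) (T₂ j) (hT₂ j) x
      have hu : (T₁ j)ᵀ *ᵥ (Matrix.diagonal (κ j) *ᵥ (T₂ j *ᵥ x)) = M *ᵥ x := by
        rw [mulVec_mulVec, mulVec_mulVec, hM, hK, Matrix.mul_assoc]
      rw [hxKx, hu] at hnn
      linarith
    have hApsd : (1 - Mᵀ * M).PosSemidef := by
      refine Matrix.PosSemidef.of_dotProduct_mulVec_nonneg ?_ ?_
      · have : (1 - Mᵀ * M)ᵀ = 1 - Mᵀ * M := by
          rw [transpose_sub, transpose_one, transpose_mul, transpose_transpose]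
        rw [Matrix.IsHermitian, conjTranspose_eq_transpose_of_trivial]
        exact this
      · intro x
        have := hMx x
        have h2 := hquadA x
        simp only [star_trivial]
        rw [h2]
        linarith
    -- trace of A equals d j
    have htrA : (1 - Mᵀ * M).trace = d j := by
      rw [Matrix.trace_sub, Matrix.trace_one, hd]
      simp only
      rw [hfs]
      congr 1
      · simp
      · simp only [Matrix.trace, Matrix.diag, Matrix.mul_apply, Matrix.transpose_apply]
        rw [Finset.sum_comm]
        exact Finset.sum_congr rfl fun i _ => Finset.sum_congr rfl fun k _ => (sq _).symm
    constructor
    · -- residual bound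
      have hresid : (v j - w j) ⬝ᵥ (Matrix.diagonal (κ j) *ᵥ (v j - w j))
          = c ⬝ᵥ ((1 - Mᵀ * M) *ᵥ c) := by
        rw [hw j, resid_eq (κ j) (T₁ j) (hT₁ j) (v j), hquadA c]
        have hu : (T₁ j)ᵀ *ᵥ (Matrix.diagonal (κ j) *ᵥ v j) = M *ᵥ c := by
          rw [← hc, mulVec_mulVec, mulVec_mulVec, hM, hK, Matrix.mul_assoc]
        have hvKv : v j ⬝ᵥ (Matrix.diagonal (κ j) *ᵥ v j) = c ⬝ᵥ c := by
          rw [← hc]; exact orth_quad (κ j) (T₂ j) (hT₂ j) c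
        rw [hu, hvKv]
      have hqc : q j = c ⬝ᵥ c := by
        rw [hq]; simp only; rw [← hc]; exact orth_quad (κ j) (T₂ j) (hT₂ j) c
      rw [hresid, hqc, ← htrA]
      exact psd_quad_le_trace_mul _ hApsd c
    · rw [← htrA]
      exact psd_trace_nonneg _ hApsd
  -- assemble
  have hbdd : BddAbove (Set.range d) := Set.Finite.bddAbove (Set.finite_range d)
  have hsupd : ∀ j, d j ≤ ⨆ j, d j := fun j => le_ciSup hbdd j
  have hsup0 : 0 ≤ ⨆ j, d j :=
    le_trans (hblock (Classical.arbitrary _)).2 (hsupd _)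
  have hq0 : ∀ j, 0 ≤ q j := fun j => dotK_nonneg (κ j) (hκ j) (v j)
  calc ∑ j, (v j - w j) ⬝ᵥ (Matrix.diagonal (κ j) *ᵥ (v j - w j))
      ≤ ∑ j, d j * q j := Finset.sum_le_sum fun j _ => (hblock j).1
    _ ≤ ∑ j, (⨆ j, d j) * q j :=
        Finset.sum_le_sum fun j _ => mul_le_mul_of_nonneg_right (hsupd j) (hq0 j)
    _ = (⨆ j, d j) * ∑ j, q j := by rw [Finset.mul_sum]
    _ ≤ (⨆ j, d j) * 1 := mul_le_mul_of_nonneg_left hvnorm hsup0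
    _ = ⨆ j, d j := mul_one _
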